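/- (Rodrigues' formula.) If θ := ‖a‖₂ ≠ 0, then the matrix exponential of A(a) is given by exp(A(a)) = I + (sin θ / θ) · A(a) + ((1 − cos θ)/θ²) · A(a)², where I is the 3×3 identity matrix. -/

import Mathlib

/-- The cross-product (skew-symmetric) matrix of a vector `a ∈ ℝ³`. -/
def crossMatrix (a : EuclideanSpace ℝ (Fin 3)) : Matrix (Fin 3) (Fin 3) ℝ :=
  !![0, -a 2, a 1; a 2, 0, -a 0; -a 1, a 0, 0]

lemma crossMatrix_norm_sq (a : EuclideanSpace ℝ (Fin 3)) :
    ‖a‖ ^ 2 = a 0 ^ 2 + a 1 ^ 2 + a 2 ^ 2 := by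
  rw [EuclideanSpace.norm_eq, Real.sq_sqrt (by positivity)]
  simp [Fin.sum_univ_three, Real.norm_eq_abs, sq_abs]

lemma crossMatrix_pow_three (a : EuclideanSpace ℝ (Fin 3)) :
    crossMatrix a ^ 3 = (-‖a‖ ^ 2) • crossMatrix a := by
  rw [crossMatrix_norm_sq]
  ext i j
  fin_cases i <;> fin_cases j <;>
    simp [crossMatrix, pow_succ, Matrix.mul_apply, Fin.sum_univ_three] <;> ring

lemma crossMatrix_pow_four (a : EuclideanSpace ℝ (Fin 3)) :
    crossMatrix a ^ 4 = (-‖a‖ ^ 2) • crossMatrix a ^ 2 := by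
  have h : crossMatrix a ^ 4 = crossMatrix a ^ 3 * crossMatrix a := pow_succ _ 3
  rw [h, crossMatrix_pow_three, Matrix.smul_mul, ← pow_two]

lemma crossMatrix_pow_odd (a : EuclideanSpace ℝ (Fin 3)) (k : ℕ) :
    crossMatrix a ^ (2 * k + 1) = ((-‖a‖ ^ 2) ^ k) • crossMatrix a := by
  induction k with
  | zero => simp
  | succ k ih =>
    have h : 2 * (k + 1) + 1 = (2 * k + 1) + 2 := by ring
    have h3 : crossMatrix a * crossMatrix a ^ 2 = crossMatrix a ^ 3 := (pow_succ' _ 2).symm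
    rw [h, pow_add, ih, Matrix.smul_mul, h3, crossMatrix_pow_three, smul_smul, ← pow_succ]

lemma crossMatrix_pow_even (a : EuclideanSpace ℝ (Fin 3)) (k : ℕ) :
    crossMatrix a ^ (2 * k + 2) = ((-‖a‖ ^ 2) ^ k) • crossMatrix a ^ 2 := by
  induction k with
  | zero => simp
  | succ k ih =>
    have h : 2 * (k + 1) + 2 = (2 * k + 2) + 2 := by ring
    rw [h, pow_add, ih, Matrix.smul_mul, ← pow_add, crossMatrix_pow_four, smul_smul,
      ← pow_succ]

open scoped Nat in
set_option maxHeartbeats 2000000 in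
/-- **Rodrigues' formula.** If `θ = ‖a‖ ≠ 0`, then the matrix exponential of the
cross-product matrix `A(a)` is `I + (sin θ / θ) A(a) + ((1 - cos θ)/θ²) A(a)²`. -/
theorem rodrigues_formula (a : EuclideanSpace ℝ (Fin 3)) (hθ : ‖a‖ ≠ 0) :
    NormedSpace.exp (crossMatrix a)
      = 1 + (Real.sin ‖a‖ / ‖a‖) • crossMatrix a
          + ((1 - Real.cos ‖a‖) / ‖a‖ ^ 2) • (crossMatrix a ^ 2) := by
  rw [NormedSpace.exp_eq_tsum (𝕂 := ℝ)]
  refine HasSum.tsum_eq ?_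
  have hfac : ∀ n : ℕ, ((n ! : ℝ)) ≠ 0 := fun n =>
    Nat.cast_ne_zero.mpr (Nat.factorial_ne_zero n)
  -- odd part
  have keyo : ∀ k : ℕ, (((2 * k + 1)! : ℝ)⁻¹) • crossMatrix a ^ (2 * k + 1)
      = (((-1 : ℝ) ^ k * ‖a‖ ^ (2 * k + 1) / (2 * k + 1)!) / ‖a‖) • crossMatrix a := by
    intro k
    rw [crossMatrix_pow_odd, smul_smul, neg_pow, ← pow_mul]
    congr 1
    field_simp [hfac]
    ring
  have hodd : HasSum (fun k : ℕ => (((2 * k + 1)! : ℝ)⁻¹) • crossMatrix a ^ (2 * k + 1))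
      ((Real.sin ‖a‖ / ‖a‖) • crossMatrix a) := by
    have hs := ((Real.hasSum_sin ‖a‖).div_const ‖a‖).smul_const (crossMatrix a)
    simp only [keyo]
    exact hs
  -- even part
  set f : ℕ → ℝ := fun k => (-1 : ℝ) ^ k * ‖a‖ ^ (2 * k) / (2 * k)! with hf
  have hc1 : HasSum (fun k : ℕ => f (k + 1)) (Real.cos ‖a‖ - 1) := by
    refine (hasSum_nat_add_iff (f := f) 1).mpr ?_
    have : Real.cos ‖a‖ - 1 + ∑ i ∈ Finset.range 1, f i = Real.cos ‖a‖ := by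
      simp [hf]
    rw [this]
    exact Real.hasSum_cos ‖a‖
  have hc2 : HasSum (fun k : ℕ => f (k + 1) / (-‖a‖ ^ 2))
      ((1 - Real.cos ‖a‖) / ‖a‖ ^ 2) := by
    have h := hc1.div_const (-‖a‖ ^ 2)
    have : (Real.cos ‖a‖ - 1) / (-‖a‖ ^ 2) = (1 - Real.cos ‖a‖) / ‖a‖ ^ 2 := by
      field_simp
      ring
    rwa [this] at h
  set g : ℕ → Matrix (Fin 3) (Fin 3) ℝ :=
    fun k => (((2 * k)! : ℝ)⁻¹) • crossMatrix a ^ (2 * k) with hg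
  have keye : ∀ k : ℕ, g (k + 1) = (f (k + 1) / (-‖a‖ ^ 2)) • crossMatrix a ^ 2 := by
    intro k
    have h2 : 2 * (k + 1) = 2 * k + 2 := by ring
    rw [hg]
    simp only [h2]
    rw [crossMatrix_pow_even, smul_smul, hf]
    congr 1
    rw [show ((-‖a‖ ^ 2 : ℝ) ^ k) = (-1) ^ k * ‖a‖ ^ (2 * k) from by rw [neg_pow, ← pow_mul]]
    beta_reduce
    rw [h2]
    field_simp [hfac]
    ring
  have hshift : HasSum (fun k : ℕ => g (k + 1)) (((1 - Real.cos ‖a‖) / ‖a‖ ^ 2) • crossMatrix a ^ 2) := by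
    have h := hc2.smul_const (crossMatrix a ^ 2)
    simp only [keye]
    exact h
  have heven : HasSum g (((1 - Real.cos ‖a‖) / ‖a‖ ^ 2) • crossMatrix a ^ 2 +
      ∑ i ∈ Finset.range 1, g i) := (hasSum_nat_add_iff (f := g) 1).mp hshift
  have hg0 : ∑ i ∈ Finset.range 1, g i = 1 := by
    simp [hg]
  rw [hg0] at heven
  rw [hg] at heven
  have htot := HasSum.even_add_odd
    (f := fun n : ℕ => ((n ! : ℝ)⁻¹) • crossMatrix a ^ n) heven hodd
  convert htot using 1
  case e'_6 => abel
  all_goals rfl
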